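/- Fix ε > 0 and an integer d ≥ 1. There exists p₀ > 0 (depending only on d and ε) and a constant c > 0 (depending only on d and ε) such that for all integers n ≥ k ≥ 2d with k/n ≤ p₀ and every d-uniform hypergraph H on [n], there exists a subhypergraph H′ ⊆ H (obtained by removing hyperedges) such that: (1) Pr_{S∼ν_{n,k}}[H′|_S ≠ ∅] ≥ c · Pr_{S∼ν_{n,k}}[H|_S ≠ ∅]; and (2) for every hyperedge e ∈ H′, Pr_{S∼ν_{n,k}}[H′|_S = {e} | S ⊇ e] ≥ 1 − ε. -/

import Mathlib

set_option maxHeartbeats 1000000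

open Finset

/-- The family of `k`-element subsets of `[n]` (modeled as `Fin n`);
`ν_{n,k}` is the uniform distribution on this family. -/
def ksets (n k : ℕ) : Finset (Finset (Fin n)) := Finset.univ.powersetCard k


lemma card_ksets_superset {n k : ℕ} (T : Finset (Fin n)) (htk : T.card ≤ k) :
    ((ksets n k).filter (fun S => T ⊆ S)).card = (n - T.card).choose (k - T.card) := by
  classical
  have h1 : ((ksets n k).filter (fun S => T ⊆ S)).card
      = (((univ : Finset (Fin n)) \ T).powersetCard (k - T.card)).card := by
    apply Finset.card_bij' (i := fun S _ => S \ T) (j := fun U _ => U ∪ T)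
    · intro S hS
      simp only [ksets, mem_filter, mem_powersetCard] at hS
      obtain ⟨⟨-, hcard⟩, hTS⟩ := hS
      rw [mem_powersetCard]
      exact ⟨sdiff_subset_sdiff (subset_univ S) le_rfl,
        by rw [card_sdiff_of_subset hTS, hcard]⟩
    · intro U hU
      rw [mem_powersetCard] at hU
      obtain ⟨hUsub, hUcard⟩ := hU
      have hdisj : Disjoint U T := by
        intro x hx1 hx2 y hy
        have := hUsub (hx1 hy)
        simp only [mem_sdiff] at this
        exact absurd (hx2 hy) this.2
      simp only [ksets, mem_filter, mem_powersetCard]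
      refine ⟨⟨subset_univ _, ?_⟩, subset_union_right⟩
      rw [card_union_of_disjoint hdisj, hUcard]
      omega
    · intro S hS
      simp only [ksets, mem_filter, mem_powersetCard] at hS
      exact sdiff_union_of_subset hS.2
    · intro U hU
      rw [mem_powersetCard] at hU
      have hdisj : Disjoint U T := by
        intro x hx1 hx2 y hy
        have := hU.1 (hx1 hy)
        simp only [mem_sdiff] at this
        exact absurd (hx2 hy) this.2
      exact union_sdiff_cancel_right hdisj
  rw [h1, Finset.card_powersetCard, card_sdiff_of_subset (subset_univ T), card_univ, Fintype.card_fin]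

-- ratio identity: (k-j) * C(n-j, k-j) = (n-j) * C(n-j-1, k-j-1)
lemma beta_succ {n k j : ℕ} (hj : j < k) (hk : k ≤ n) :
    (k - j) * (n - j).choose (k - j) = (n - j) * (n - j - 1).choose (k - j - 1) := by
  have h1 : 1 ≤ k - j := by omega
  have h2 : 1 ≤ n - j := by omega
  have := Nat.add_one_mul_choose_eq (n - j - 1) (k - j - 1)
  have e1 : n - j - 1 + 1 = n - j := by omega
  have e2 : k - j - 1 + 1 = k - j := by omega
  rw [e1, e2] at this
  rw [this, Nat.mul_comm]

lemma beta_cast_succ {n k j : ℕ} (hj : j < k) (hk : k ≤ n) :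
    ((k : ℝ) - j) * ((n - j).choose (k - j) : ℝ)
      = ((n : ℝ) - j) * ((n - (j+1)).choose (k - (j+1)) : ℝ) := by
  have e1 : n - (j+1) = n - j - 1 := by omega
  have e2 : k - (j+1) = k - j - 1 := by omega
  rw [e1, e2]
  have := beta_succ hj hk
  have c1 : ((k - j : ℕ) : ℝ) = (k:ℝ) - j := by
    rw [Nat.cast_sub (by omega)]
  have c2 : ((n - j : ℕ) : ℝ) = (n:ℝ) - j := by
    rw [Nat.cast_sub (by omega)]
  calc ((k : ℝ) - j) * ((n - j).choose (k - j) : ℝ)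
      = (((k - j) * (n - j).choose (k - j) : ℕ) : ℝ) := by push_cast [c1]; ring
    _ = (((n - j) * (n - j - 1).choose (k - j - 1) : ℕ) : ℝ) := by rw [this]
    _ = ((n : ℝ) - j) * ((n - j - 1).choose (k - j - 1) : ℝ) := by push_cast [c2]; ring

lemma L1 {n k d : ℕ} (h2d : 2*d ≤ k) (hkn : k ≤ n) (hk0 : 0 < k)
    (h8 : 8*(k:ℝ) ≤ (n:ℝ)) :
    ∀ i, d + i ≤ 2*d →
      (((n - (d+i)).choose (k - (d+i)) : ℝ))
        ≤ (2*(k:ℝ)/(n:ℝ))^i * ((n - d).choose (k - d) : ℝ) := by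
  have hk0' : (0:ℝ) < k := by exact_mod_cast hk0
  have hn0 : (0:ℝ) < n := by linarith
  intro i
  induction i with
  | zero => intro _; simp
  | succ i ih =>
    intro hle
    have ih' := ih (by omega)
    set j := d + i with hjdef
    have hjk : j < k := by omega
    have hjn : (j : ℝ) ≤ (k : ℝ) := by exact_mod_cast Nat.le_of_lt hjk
    have key := beta_cast_succ hjk hkn
    have hb : (0:ℝ) < (n:ℝ) - j := by
      have : (j:ℝ) < (n:ℝ) := by
        have : j < n := by omega
        exact_mod_cast this
      linarith
    have hβ0 : (0:ℝ) ≤ ((n - j).choose (k - j) : ℝ) := by positivity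
    have step : ((n - (j+1)).choose (k - (j+1)) : ℝ)
        ≤ (2*(k:ℝ)/(n:ℝ)) * ((n - j).choose (k - j) : ℝ) := by
      rw [div_mul_eq_mul_div, le_div_iff₀ hn0]
      -- goal : β (j+1) * n ≤ 2k * β j
      have hj2d : (j:ℝ) ≤ 2*(d:ℝ) := by
        have : j ≤ 2*d := by omega
        exact_mod_cast this
      have hkd : 2*(d:ℝ) ≤ (k:ℝ) := by exact_mod_cast h2d
      nlinarith [key, hβ0, (show (0:ℝ) ≤ ((n - (j+1)).choose (k - (j+1)) : ℝ) by positivity)]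
    have hd1 : d + (i+1) = j + 1 := by omega
    rw [hd1, pow_succ]
    calc ((n - (j+1)).choose (k - (j+1)) : ℝ)
        ≤ (2*(k:ℝ)/(n:ℝ)) * ((n - j).choose (k - j) : ℝ) := step
      _ ≤ (2*(k:ℝ)/(n:ℝ)) * ((2*(k:ℝ)/(n:ℝ))^i * ((n - d).choose (k - d) : ℝ)) := by
          apply mul_le_mul_of_nonneg_left ih' (by positivity)
      _ = (2*(k:ℝ)/(n:ℝ))^i * (2*(k:ℝ)/(n:ℝ)) * ((n - d).choose (k - d) : ℝ) := by ring

lemma L2 {n k d : ℕ} (h2d : 2*d ≤ k) (hkn : k ≤ n) (hk0 : 0 < k)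
    (h8 : 8*(k:ℝ) ≤ (n:ℝ)) :
    ∀ i, i ≤ d →
      (((n - (d-i)).choose (k - (d-i)) : ℝ))
        ≤ (2*(n:ℝ)/(k:ℝ))^i * ((n - d).choose (k - d) : ℝ) := by
  have hk0' : (0:ℝ) < k := by exact_mod_cast hk0
  have hn0 : (0:ℝ) < n := by linarith
  intro i
  induction i with
  | zero => intro _; simp
  | succ i ih =>
    intro hle
    have ih' := ih (by omega)
    set j := d - (i+1) with hjdef
    have hji : j + 1 = d - i := by omega
    have hjk : j < k := by omega
    have key := beta_cast_succ hjk hkn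
    have hjd : (j:ℝ) ≤ (d:ℝ) := by exact_mod_cast (show j ≤ d by omega)
    have hkd : 2*(d:ℝ) ≤ (k:ℝ) := by exact_mod_cast h2d
    have hb : (0:ℝ) < (k:ℝ) - j := by
      have : (j:ℝ) < (k:ℝ) := by exact_mod_cast hjk
      linarith
    have hβ0 : (0:ℝ) ≤ ((n - (j+1)).choose (k - (j+1)) : ℝ) := by positivity
    have step : ((n - j).choose (k - j) : ℝ)
        ≤ (2*(n:ℝ)/(k:ℝ)) * ((n - (j+1)).choose (k - (j+1)) : ℝ) := by
      rw [div_mul_eq_mul_div, le_div_iff₀ hk0']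
      -- goal : β j * k ≤ 2n * β (j+1)
      nlinarith [key, hβ0, (show (0:ℝ) ≤ ((n - j).choose (k - j) : ℝ) by positivity)]
    rw [pow_succ]
    calc ((n - j).choose (k - j) : ℝ)
        ≤ (2*(n:ℝ)/(k:ℝ)) * ((n - (j+1)).choose (k - (j+1)) : ℝ) := step
      _ = (2*(n:ℝ)/(k:ℝ)) * ((n - (d-i)).choose (k - (d-i)) : ℝ) := by rw [hji]
      _ ≤ (2*(n:ℝ)/(k:ℝ)) * ((2*(n:ℝ)/(k:ℝ))^i * ((n - d).choose (k - d) : ℝ)) := by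
          apply mul_le_mul_of_nonneg_left ih' (by positivity)
      _ = (2*(n:ℝ)/(k:ℝ))^i * (2*(n:ℝ)/(k:ℝ)) * ((n - d).choose (k - d) : ℝ) := by ring

lemma bonferroni {α β : Type*} [DecidableEq α] [DecidableEq β]
    (s : Finset α) (T : α → Finset β) :
    ∑ e ∈ s, ((T e).card : ℝ)
      ≤ ((s.biUnion T).card : ℝ) + ∑ e ∈ s, ∑ f ∈ s.erase e, ((T e ∩ T f).card : ℝ) := by
  classical
  induction s using Finset.induction_on with
  | empty => simp
  | @insert a t hat ih =>
    rw [Finset.sum_insert hat, Finset.biUnion_insert]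
    have h1 : ((T a ∪ t.biUnion T).card : ℝ)
        ≥ ((T a).card : ℝ) + ((t.biUnion T).card : ℝ) - ∑ f ∈ t, ((T a ∩ T f).card : ℝ) := by
      have hcard : (T a ∪ t.biUnion T).card + (T a ∩ t.biUnion T).card
          = (T a).card + (t.biUnion T).card := Finset.card_union_add_card_inter _ _
      have hint : (T a ∩ t.biUnion T).card ≤ ∑ f ∈ t, (T a ∩ T f).card := by
        have : T a ∩ t.biUnion T = t.biUnion (fun f => T a ∩ T f) := by
          ext x; simp [Finset.mem_biUnion]; tauto
        rw [this]
        exact Finset.card_biUnion_le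
      have h2 : (↑((T a ∩ t.biUnion T).card) : ℝ) ≤ ∑ f ∈ t, ((T a ∩ T f).card : ℝ) := by
        calc (↑((T a ∩ t.biUnion T).card) : ℝ) ≤ ((∑ f ∈ t, (T a ∩ T f).card : ℕ) : ℝ) := by
              exact_mod_cast hint
          _ = ∑ f ∈ t, ((T a ∩ T f).card : ℝ) := by push_cast; rfl
      have h3 : (↑((T a ∪ t.biUnion T).card) : ℝ) + (↑((T a ∩ t.biUnion T).card) : ℝ)
          = ((T a).card : ℝ) + ((t.biUnion T).card : ℝ) := by exact_mod_cast hcard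
      linarith
    -- bound the new double sum from below
    have hds : ∑ e ∈ insert a t, ∑ f ∈ (insert a t).erase e, ((T e ∩ T f).card : ℝ)
        ≥ (∑ f ∈ t, ((T a ∩ T f).card : ℝ))
          + ∑ e ∈ t, ∑ f ∈ t.erase e, ((T e ∩ T f).card : ℝ) := by
      rw [Finset.sum_insert hat]
      have e1 : (insert a t).erase a = t := by
        rw [Finset.erase_insert hat]
      rw [e1]
      apply add_le_add_right
      apply Finset.sum_le_sum
      intro e he
      apply Finset.sum_le_sum_of_subset_of_nonneg
      · intro f hf
        rw [Finset.mem_erase] at hf ⊢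
        exact ⟨hf.1, Finset.mem_insert_of_mem hf.2⟩
      · intros; positivity
    have := ih
    linarith

lemma exists_good {n k d : ℕ} (hd : 1 ≤ d) (h2d : 2*d ≤ k) (hkn : k ≤ n)
    (ε₃ : ℝ) (hε₃0 : 0 < ε₃) (hε₃1 : ε₃ ≤ 1)
    (hp8 : 8*(k:ℝ) ≤ (n:ℝ)) (hpε : (k:ℝ)/(n:ℝ) ≤ ε₃/2)
    (H : Finset (Finset (Fin n))) (hH : ∀ e ∈ H, e.card = d) :
    ∃ G ⊆ H,
      (∀ e ∈ G, ∑ f ∈ G.erase e,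
          (((ksets n k).filter (fun S => e ∪ f ⊆ S)).card : ℝ)
            ≤ 2^d * ε₃ * ((n-d).choose (k-d) : ℝ)) ∧
      (ε₃/2^(3*d+2)) *
          (((ksets n k).filter (fun S => (H.filter (fun e => e ⊆ S)).Nonempty)).card : ℝ)
        ≤ (G.card : ℝ) * ((n-d).choose (k-d) : ℝ) := by
  classical
  have hk0 : 0 < k := by omega
  have hk0' : (0:ℝ) < k := by exact_mod_cast hk0
  have hn0 : (0:ℝ) < n := by linarith
  set B : ℝ := ((n-d).choose (k-d) : ℝ) with hBdef
  have hB0 : (0:ℝ) ≤ B := by positivity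
  have hinv : ((n:ℝ)/(2*(k:ℝ))) * (2*(k:ℝ)/(n:ℝ)) = 1 := by field_simp
  have hbase : (1:ℝ)/ε₃ ≤ (n:ℝ)/(2*(k:ℝ)) := by
    rw [div_le_div_iff₀ hε₃0 (by positivity)]
    rw [div_le_div_iff₀ hn0 (by norm_num)] at hpε
    linarith
  have hbase1 : (1:ℝ) ≤ (n:ℝ)/(2*(k:ℝ)) := by
    have : (1:ℝ) ≤ 1/ε₃ := by
      rw [le_div_iff₀ hε₃0]; linarith
    linarith
  set D : ℕ → ℕ := fun s => ⌊ε₃ * ((n:ℝ)/(2*(k:ℝ)))^(d-s)⌋₊ with hD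
  have hDle : ∀ s, (D s : ℝ) ≤ ε₃ * ((n:ℝ)/(2*(k:ℝ)))^(d-s) := by
    intro s; exact Nat.floor_le (by positivity)
  have honele : ∀ s, s < d → (1:ℝ) ≤ ε₃ * ((n:ℝ)/(2*(k:ℝ)))^(d-s) := by
    intro s hs
    have h1 : ((n:ℝ)/(2*(k:ℝ))) ≤ ((n:ℝ)/(2*(k:ℝ)))^(d-s) :=
      le_self_pow₀ hbase1 (by omega)
    calc (1:ℝ) = ε₃ * (1/ε₃) := by field_simp
      _ ≤ ε₃ * ((n:ℝ)/(2*(k:ℝ))) := by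
          apply mul_le_mul_of_nonneg_left hbase (le_of_lt hε₃0)
      _ ≤ ε₃ * ((n:ℝ)/(2*(k:ℝ)))^(d-s) := by
          apply mul_le_mul_of_nonneg_left h1 (le_of_lt hε₃0)
  have hDge : ∀ s, s < d → ε₃ * ((n:ℝ)/(2*(k:ℝ)))^(d-s) ≤ 2*(D s : ℝ) := by
    intro s hs
    have h1 : (1:ℕ) ≤ D s := by
      apply Nat.le_floor
      exact_mod_cast honele s hs
    have h2 : ε₃ * ((n:ℝ)/(2*(k:ℝ)))^(d-s) < (D s : ℝ) + 1 :=
      Nat.lt_floor_add_one (ε₃ * ((n:ℝ)/(2*(k:ℝ)))^(d-s))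
    have h3 : (1:ℝ) ≤ (D s : ℝ) := by exact_mod_cast h1
    linarith
  -- maximal admissible G
  set Ok : Finset (Finset (Fin n)) → Prop := fun G => G.card ≤ D 0 ∧
    ∀ g : Finset (Fin n), g.Nonempty → g.card < d →
      (G.filter (fun f => g ⊆ f)).card ≤ D g.card with hOk
  have hne : (H.powerset.filter Ok).Nonempty := by
    refine ⟨∅, ?_⟩
    simp only [mem_filter, Finset.mem_powerset]
    refine ⟨Finset.empty_subset _, Nat.zero_le _, ?_⟩
    intro g _ _
    simp
  obtain ⟨G, hGmem, hGmax⟩ := Finset.exists_max_image (H.powerset.filter Ok)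
    (fun G => G.card) hne
  simp only [mem_filter, Finset.mem_powerset, hOk] at hGmem
  obtain ⟨hGH, hGcap, hGdeg⟩ := hGmem
  have F1 : ∀ e ∈ H, e ∉ G → G.card < D 0 →
      ∃ g, g ⊆ e ∧ g.Nonempty ∧ g.card < d ∧
        D g.card ≤ (G.filter (fun f => g ⊆ f)).card := by
    intro e heH heG hltD
    by_contra hcon
    push_neg at hcon
    have hOk' : Ok (insert e G) := by
      constructor
      · rw [Finset.card_insert_of_notMem heG]; omega
      · intro g hg1 hg2
        by_cases hge : g ⊆ e
        · have h1 : ((insert e G).filter (fun f => g ⊆ f)).card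
              ≤ (G.filter (fun f => g ⊆ f)).card + 1 := by
            rw [Finset.filter_insert, if_pos hge]
            exact Finset.card_insert_le _ _
          have h2 := hcon g hge hg1 hg2
          omega
        · rw [Finset.filter_insert, if_neg hge]
          exact hGdeg g hg1 hg2
    have : (insert e G).card ≤ G.card := by
      refine hGmax _ ?_
      simp only [mem_filter, Finset.mem_powerset]
      exact ⟨Finset.insert_subset heH hGH, hOk'⟩
    rw [Finset.card_insert_of_notMem heG] at this
    omega
  refine ⟨G, hGH, ?_, ?_⟩
  · -- spread property
    intro e heG
    have hed : e.card = d := hH e (hGH heG)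
    have hmaps : ∀ f ∈ G.erase e, e ∩ f ∈ e.powerset := by
      intro f _; rw [Finset.mem_powerset]; exact Finset.inter_subset_left
    rw [← Finset.sum_fiberwise_of_maps_to hmaps]
    have hper : ∀ g ∈ e.powerset,
        (∑ f ∈ (G.erase e).filter (fun f => e ∩ f = g),
          (((ksets n k).filter (fun S => e ∪ f ⊆ S)).card : ℝ)) ≤ ε₃ * B := by
      intro g hg
      rw [Finset.mem_powerset] at hg
      by_cases hge : g = e
      · have : (G.erase e).filter (fun f => e ∩ f = g) = ∅ := by
          rw [Finset.filter_eq_empty_iff]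
          intro f hf
          rw [Finset.mem_erase] at hf
          intro hc
          apply hf.1
          have hfe : e ⊆ f := by
            rw [hge] at hc
            intro x hx
            have : x ∈ e ∩ f := by rw [hc]; exact hx
            exact (Finset.mem_inter.mp this).2
          exact (Finset.eq_of_subset_of_card_le hfe
            (by rw [hed, hH f (hGH hf.2)])).symm
        rw [this, Finset.sum_empty]
        positivity
      · -- g ⊊ e
        have hglt : g.card < d := by
          have := Finset.card_lt_card (Finset.ssubset_iff_subset_ne.mpr ⟨hg, hge⟩)
          omega
        set s := g.card with hs
        -- fiber cardinality bound
        have hfibsub : (G.erase e).filter (fun f => e ∩ f = g) ⊆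
            G.filter (fun f => g ⊆ f) := by
          intro f hf
          simp only [mem_filter, Finset.mem_erase] at hf ⊢
          refine ⟨hf.1.2, ?_⟩
          rw [← hf.2]; exact Finset.inter_subset_right
        have hfib : ((G.erase e).filter (fun f => e ∩ f = g)).card ≤ D s := by
          rcases Finset.eq_empty_or_nonempty g with hg0 | hg1
          · calc ((G.erase e).filter (fun f => e ∩ f = g)).card
                ≤ G.card := Finset.card_le_card
                  (le_trans hfibsub (Finset.filter_subset _ _))
              _ ≤ D 0 := hGcap
              _ = D s := by
                  rw [hg0, Finset.card_empty] at hs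
                  rw [hs]
          · exact le_trans (Finset.card_le_card hfibsub) (hGdeg g hg1 hglt)
        -- each term equals β_(2d - s)
        have hterm : ∀ f ∈ (G.erase e).filter (fun f => e ∩ f = g),
            (((ksets n k).filter (fun S => e ∪ f ⊆ S)).card : ℝ)
              = ((n - (2*d - s)).choose (k - (2*d - s)) : ℝ) := by
          intro f hf
          simp only [mem_filter, Finset.mem_erase] at hf
          have hfd : f.card = d := hH f (hGH hf.1.2)
          have hufcard : (e ∪ f).card = 2*d - s := by
            have h := Finset.card_union_add_card_inter e f
            rw [hf.2, hed, hfd] at h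
            omega
          rw [card_ksets_superset _ (by rw [hufcard]; omega), hufcard]
        rw [Finset.sum_congr rfl hterm, Finset.sum_const, nsmul_eq_mul]
        -- bound: fib * β(2d-s) ≤ D s * (2k/n)^(d-s) * B ≤ ε₃ B
        have hL1 : ((n - (2*d - s)).choose (k - (2*d - s)) : ℝ)
            ≤ (2*(k:ℝ)/(n:ℝ))^(d-s) * B := by
          have := L1 (d := d) h2d hkn hk0 hp8 (d - s) (by omega)
          rwa [show d + (d - s) = 2*d - s by omega] at this
        have hfib' : (((G.erase e).filter (fun f => e ∩ f = g)).card : ℝ) ≤ (D s : ℝ) := by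
          exact_mod_cast hfib
        have hterm0 : (0:ℝ) ≤ ((n - (2*d - s)).choose (k - (2*d - s)) : ℝ) := by positivity
        calc (((G.erase e).filter (fun f => e ∩ f = g)).card : ℝ)
              * ((n - (2*d - s)).choose (k - (2*d - s)) : ℝ)
            ≤ (D s : ℝ) * ((2*(k:ℝ)/(n:ℝ))^(d-s) * B) := by
              apply mul_le_mul hfib' hL1 hterm0 (by positivity)
          _ ≤ (ε₃ * ((n:ℝ)/(2*(k:ℝ)))^(d-s)) * ((2*(k:ℝ)/(n:ℝ))^(d-s) * B) := by
              apply mul_le_mul_of_nonneg_right (hDle s) (by positivity)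
          _ = ε₃ * (((n:ℝ)/(2*(k:ℝ))) * (2*(k:ℝ)/(n:ℝ)))^(d-s) * B := by
              rw [mul_pow]; ring
          _ = ε₃ * B := by rw [hinv, one_pow, mul_one]
    calc ∑ g ∈ e.powerset, ∑ f ∈ (G.erase e).filter (fun f => e ∩ f = g),
            (((ksets n k).filter (fun S => e ∪ f ⊆ S)).card : ℝ)
        ≤ ∑ g ∈ e.powerset, ε₃ * B := Finset.sum_le_sum hper
      _ = (e.powerset.card : ℝ) * (ε₃ * B) := by rw [Finset.sum_const, nsmul_eq_mul]
      _ = 2^d * ε₃ * B := by rw [Finset.card_powerset, hed]; push_cast; ring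
  · -- coverage property
    have hAk : (((ksets n k).filter
        (fun S => (H.filter (fun e => e ⊆ S)).Nonempty)).card : ℝ)
        ≤ ((n-0).choose (k-0) : ℝ) := by
      have h1 : ((ksets n k).filter
          (fun S => (H.filter (fun e => e ⊆ S)).Nonempty)).card ≤ (ksets n k).card :=
        Finset.card_filter_le _ _
      have h2 : (ksets n k).card = n.choose k := by
        rw [ksets, Finset.card_powersetCard, card_univ, Fintype.card_fin]
      rw [Nat.sub_zero, Nat.sub_zero]
      rw [h2] at h1
      exact_mod_cast h1
    have h2pos : (0:ℝ) < 2^(3*d+2) := by positivity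
    have h4dle : (2:ℝ) * 4^d ≤ 2^(3*d+2) := by
      have e4 : (4:ℝ)^d = 2^(2*d) := by
        rw [show (4:ℝ) = 2^2 by norm_num, ← pow_mul]
      rw [e4, show 3*d+2 = 2*d + (d+2) by ring, pow_add]
      have h1 : (2:ℝ) ≤ 2^(d+2) := by
        calc (2:ℝ) = 2^1 := by norm_num
          _ ≤ 2^(d+2) := by
            apply pow_le_pow_right₀ (by norm_num) (by omega)
      nlinarith [pow_pos (show (0:ℝ) < 2 by norm_num) (2*d)]
    rw [div_mul_eq_mul_div, div_le_iff₀ h2pos]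
    by_cases hcase : G.card = D 0
    · -- size-capped case
      have hL2 : ((n-0).choose (k-0) : ℝ) ≤ (2*(n:ℝ)/(k:ℝ))^d * B := by
        have := L2 (d := d) h2d hkn hk0 hp8 d le_rfl
        rwa [show d - d = 0 by omega] at this
      have hsplit : (2*(n:ℝ)/(k:ℝ))^d = 4^d * ((n:ℝ)/(2*(k:ℝ)))^(d-0) := by
        rw [Nat.sub_zero, ← mul_pow]
        congr 1
        field_simp
        ring
      have hD0 := hDge 0 (by omega)
      have hGB : (G.card : ℝ) = (D 0 : ℝ) := by exact_mod_cast hcase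
      have hA0 : (0:ℝ) ≤ (((ksets n k).filter
          (fun S => (H.filter (fun e => e ⊆ S)).Nonempty)).card : ℝ) := by positivity
      have hpow0 : (0:ℝ) ≤ ((n:ℝ)/(2*(k:ℝ)))^(d-0) := by positivity
      have key : ε₃ * (((ksets n k).filter
          (fun S => (H.filter (fun e => e ⊆ S)).Nonempty)).card : ℝ)
          ≤ 2 * 4^d * ((G.card : ℝ) * B) := by
        calc ε₃ * (((ksets n k).filter
            (fun S => (H.filter (fun e => e ⊆ S)).Nonempty)).card : ℝ)
            ≤ ε₃ * ((2*(n:ℝ)/(k:ℝ))^d * B) := by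
              apply mul_le_mul_of_nonneg_left _ (le_of_lt hε₃0)
              exact le_trans hAk (by nlinarith [hL2, hAk])
          _ = 4^d * ((ε₃ * ((n:ℝ)/(2*(k:ℝ)))^(d-0)) * B) := by rw [hsplit]; ring
          _ ≤ 4^d * ((2 * (D 0 : ℝ)) * B) := by
              apply mul_le_mul_of_nonneg_left _ (by positivity)
              apply mul_le_mul_of_nonneg_right hD0 hB0
          _ = 2 * 4^d * ((G.card : ℝ) * B) := by rw [hGB]; ring
      have hGB0 : (0:ℝ) ≤ (G.card : ℝ) * B := by positivity
      calc ε₃ * (((ksets n k).filter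
          (fun S => (H.filter (fun e => e ⊆ S)).Nonempty)).card : ℝ)
          ≤ 2 * 4^d * ((G.card : ℝ) * B) := key
        _ ≤ 2^(3*d+2) * ((G.card : ℝ) * B) := by
            apply mul_le_mul_of_nonneg_right h4dle hGB0
        _ = (G.card : ℝ) * B * 2^(3*d+2) := by ring
    · -- coverage case
      have hlt : G.card < D 0 := lt_of_le_of_ne hGcap hcase
      set Sat : Finset (Finset (Fin n)) := univ.filter (fun g => g.Nonempty ∧ g.card < d ∧
        D g.card ≤ (G.filter (fun f => g ⊆ f)).card) with hSat
      have hcover : (ksets n k).filter (fun S => (H.filter (fun e => e ⊆ S)).Nonempty)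
          ⊆ ((ksets n k).filter (fun S => (G.filter (fun e => e ⊆ S)).Nonempty))
            ∪ Sat.biUnion (fun g => (ksets n k).filter (fun S => g ⊆ S)) := by
        intro S hS
        rw [mem_filter] at hS
        obtain ⟨hSk, f, hf⟩ := hS
        rw [mem_filter] at hf
        obtain ⟨hfH, hfS⟩ := hf
        by_cases hfG : f ∈ G
        · apply Finset.mem_union_left
          rw [mem_filter]
          exact ⟨hSk, f, mem_filter.mpr ⟨hfG, hfS⟩⟩
        · obtain ⟨g, hge, hgne, hglt, hgsat⟩ := F1 f hfH hfG hlt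
          apply Finset.mem_union_right
          rw [Finset.mem_biUnion]
          refine ⟨g, ?_, ?_⟩
          · rw [hSat, mem_filter]
            exact ⟨mem_univ _, hgne, hglt, hgsat⟩
          · rw [mem_filter]
            exact ⟨hSk, le_trans hge hfS⟩
      have hAG : ((ksets n k).filter
          (fun S => (G.filter (fun e => e ⊆ S)).Nonempty)).card
          ≤ G.card * ((n-d).choose (k-d)) := by
        have hsub : (ksets n k).filter (fun S => (G.filter (fun e => e ⊆ S)).Nonempty)
            ⊆ G.biUnion (fun e => (ksets n k).filter (fun S => e ⊆ S)) := by
          intro S hS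
          rw [mem_filter] at hS
          obtain ⟨hSk, f, hf⟩ := hS
          rw [mem_filter] at hf
          rw [Finset.mem_biUnion]
          exact ⟨f, hf.1, mem_filter.mpr ⟨hSk, hf.2⟩⟩
        calc ((ksets n k).filter
            (fun S => (G.filter (fun e => e ⊆ S)).Nonempty)).card
            ≤ (G.biUnion (fun e => (ksets n k).filter (fun S => e ⊆ S))).card :=
              Finset.card_le_card hsub
          _ ≤ ∑ e ∈ G, ((ksets n k).filter (fun S => e ⊆ S)).card :=
              Finset.card_biUnion_le
          _ = G.card * ((n-d).choose (k-d)) := by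
              apply Finset.sum_const_nat
              intro f hf
              rw [card_ksets_superset f (by rw [hH f (hGH hf)]; omega), hH f (hGH hf)]
      have hdegsum : ∑ g ∈ Sat, (G.filter (fun f => g ⊆ f)).card ≤ 2^d * G.card := by
        have e1 : ∀ g ∈ Sat, (G.filter (fun f => g ⊆ f)).card
            = ∑ f ∈ G, if g ⊆ f then 1 else 0 := by
          intro g _; exact Finset.card_filter _ _
        rw [Finset.sum_congr rfl e1, Finset.sum_comm]
        have e2 : ∀ f ∈ G, (∑ g ∈ Sat, if g ⊆ f then 1 else 0) ≤ 2^d := by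
          intro f hfG
          have : (∑ g ∈ Sat, if g ⊆ f then 1 else 0) = (Sat.filter (fun g => g ⊆ f)).card :=
            (Finset.card_filter _ _).symm
          rw [this]
          calc (Sat.filter (fun g => g ⊆ f)).card ≤ f.powerset.card := by
                apply Finset.card_le_card
                intro g hg
                rw [mem_filter] at hg
                rw [Finset.mem_powerset]
                exact hg.2
            _ = 2^d := by rw [Finset.card_powerset, hH f (hGH hfG)]
        calc ∑ f ∈ G, (∑ g ∈ Sat, if g ⊆ f then 1 else 0)
            ≤ ∑ f ∈ G, 2^d := Finset.sum_le_sum e2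
          _ = G.card * 2^d := by rw [Finset.sum_const, smul_eq_mul]
          _ = 2^d * G.card := by ring
      -- per-g bound in ℝ
      have hperg : ∀ g ∈ Sat,
          ε₃ * (((ksets n k).filter (fun S => g ⊆ S)).card : ℝ)
            ≤ 2 * 4^d * (((G.filter (fun f => g ⊆ f)).card : ℝ) * B) := by
        intro g hg
        rw [hSat, mem_filter] at hg
        obtain ⟨-, hgne, hglt, hgsat⟩ := hg
        set s := g.card with hs
        have hsd : s < d := hglt
        have hcard : (((ksets n k).filter (fun S => g ⊆ S)).card : ℝ)
            = ((n - s).choose (k - s) : ℝ) := by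
          rw [card_ksets_superset g (by omega)]
        have hL2 : ((n - s).choose (k - s) : ℝ) ≤ (2*(n:ℝ)/(k:ℝ))^(d-s) * B := by
          have := L2 (d := d) h2d hkn hk0 hp8 (d - s) (by omega)
          rwa [show d - (d - s) = s by omega] at this
        have hsplit : (2*(n:ℝ)/(k:ℝ))^(d-s) = 4^(d-s) * ((n:ℝ)/(2*(k:ℝ)))^(d-s) := by
          rw [← mul_pow]
          congr 1
          field_simp
          ring
        have h44 : (4:ℝ)^(d-s) ≤ 4^d := by
          apply pow_le_pow_right₀ (by norm_num) (by omega)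
        have hDs := hDge s hsd
        have hdegs : (D s : ℝ) ≤ ((G.filter (fun f => g ⊆ f)).card : ℝ) := by
          exact_mod_cast hgsat
        calc ε₃ * (((ksets n k).filter (fun S => g ⊆ S)).card : ℝ)
            = ε₃ * ((n - s).choose (k - s) : ℝ) := by rw [hcard]
          _ ≤ ε₃ * ((2*(n:ℝ)/(k:ℝ))^(d-s) * B) := by
              apply mul_le_mul_of_nonneg_left _ (le_of_lt hε₃0)
              exact hL2
          _ = 4^(d-s) * ((ε₃ * ((n:ℝ)/(2*(k:ℝ)))^(d-s)) * B) := by rw [hsplit]; ring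
          _ ≤ 4^(d-s) * ((2 * (D s : ℝ)) * B) := by
              apply mul_le_mul_of_nonneg_left _ (by positivity)
              apply mul_le_mul_of_nonneg_right hDs hB0
          _ ≤ 4^d * ((2 * (D s : ℝ)) * B) := by
              apply mul_le_mul_of_nonneg_right h44 (by positivity)
          _ ≤ 4^d * ((2 * ((G.filter (fun f => g ⊆ f)).card : ℝ)) * B) := by
              apply mul_le_mul_of_nonneg_left _ (by positivity)
              apply mul_le_mul_of_nonneg_right _ hB0
              linarith
          _ = 2 * 4^d * (((G.filter (fun f => g ⊆ f)).card : ℝ) * B) := by ring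
      -- assemble
      have hcover' : (((ksets n k).filter
          (fun S => (H.filter (fun e => e ⊆ S)).Nonempty)).card : ℝ)
          ≤ ((G.card : ℝ) * B) + ∑ g ∈ Sat, (((ksets n k).filter (fun S => g ⊆ S)).card : ℝ) := by
        have h1 := Finset.card_le_card hcover
        have h2 := Finset.card_union_le
          ((ksets n k).filter (fun S => (G.filter (fun e => e ⊆ S)).Nonempty))
          (Sat.biUnion (fun g => (ksets n k).filter (fun S => g ⊆ S)))
        have h3 := Finset.card_biUnion_le (s := Sat)
          (t := fun g => (ksets n k).filter (fun S => g ⊆ S))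
        have h4 : (((ksets n k).filter
            (fun S => (H.filter (fun e => e ⊆ S)).Nonempty)).card : ℕ)
            ≤ G.card * ((n-d).choose (k-d))
              + ∑ g ∈ Sat, ((ksets n k).filter (fun S => g ⊆ S)).card := by omega
        calc (((ksets n k).filter
            (fun S => (H.filter (fun e => e ⊆ S)).Nonempty)).card : ℝ)
            ≤ ((G.card * ((n-d).choose (k-d))
              + ∑ g ∈ Sat, ((ksets n k).filter (fun S => g ⊆ S)).card : ℕ) : ℝ) := by
              exact_mod_cast h4
          _ = ((G.card : ℝ) * B) + ∑ g ∈ Sat, (((ksets n k).filter (fun S => g ⊆ S)).card : ℝ) := by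
              push_cast
              ring
      have hsat_sum : ε₃ * (∑ g ∈ Sat, (((ksets n k).filter (fun S => g ⊆ S)).card : ℝ))
          ≤ 2 * 4^d * (2^d * (G.card : ℝ) * B) := by
        rw [Finset.mul_sum]
        calc ∑ g ∈ Sat, ε₃ * (((ksets n k).filter (fun S => g ⊆ S)).card : ℝ)
            ≤ ∑ g ∈ Sat, 2 * 4^d * (((G.filter (fun f => g ⊆ f)).card : ℝ) * B) :=
              Finset.sum_le_sum hperg
          _ = 2 * 4^d * ((∑ g ∈ Sat, ((G.filter (fun f => g ⊆ f)).card : ℝ)) * B) := by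
              rw [Finset.sum_mul, Finset.mul_sum]
          _ ≤ 2 * 4^d * ((2^d * (G.card : ℝ)) * B) := by
              apply mul_le_mul_of_nonneg_left _ (by positivity)
              apply mul_le_mul_of_nonneg_right _ hB0
              have : ((∑ g ∈ Sat, (G.filter (fun f => g ⊆ f)).card : ℕ) : ℝ)
                  ≤ ((2^d * G.card : ℕ) : ℝ) := by exact_mod_cast hdegsum
              push_cast at this
              calc ∑ g ∈ Sat, ((G.filter (fun f => g ⊆ f)).card : ℝ)
                  = ((∑ g ∈ Sat, (G.filter (fun f => g ⊆ f)).card : ℕ) : ℝ) := by push_cast; rfl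
                _ ≤ 2^d * (G.card : ℝ) := by push_cast; exact this
          _ = 2 * 4^d * (2^d * (G.card : ℝ) * B) := by ring
      -- final numeric combination
      have hfin : (2:ℝ) * 4^d * 2^d + ε₃ ≤ 2^(3*d+2) := by
        have e4 : (4:ℝ)^d * 2^d = 2^(3*d) := by
          rw [show (4:ℝ) = 2^2 by norm_num, ← pow_mul, ← pow_add,
            show 2*d + d = 3*d by ring]
        have h1 : (1:ℝ) ≤ 2^(3*d) := by
          calc (1:ℝ) = 2^0 := by norm_num
            _ ≤ 2^(3*d) := pow_le_pow_right₀ one_le_two (Nat.zero_le _)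
        have e5 : (2:ℝ)^(3*d+2) = 4 * 2^(3*d) := by
          rw [pow_add]; ring
        rw [e5, mul_assoc, e4]
        linarith
      have hGB0 : (0:ℝ) ≤ (G.card:ℝ) * B := mul_nonneg (Nat.cast_nonneg _) hB0
      have hS0 : (0:ℝ) ≤ ∑ g ∈ Sat, (((ksets n k).filter (fun S => g ⊆ S)).card : ℝ) :=
        Finset.sum_nonneg (fun g _ => Nat.cast_nonneg _)
      have hc' := mul_le_mul_of_nonneg_left hcover' (le_of_lt hε₃0)
      have hf' := mul_le_mul_of_nonneg_right hfin hGB0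
      rw [mul_add] at hc'
      linarith [hc', hf', hsat_sum]

/-- Hypergraph pruning lemma, uniform setting.  A hypergraph on `[n]` is a finite
set of hyperedges; `H|_S` is `H.filter (· ⊆ S)`.  Conditional probabilities are
expressed by clearing denominators: e.g. `Pr[H'|_S = {e} ∣ S ⊇ e] ≥ 1 - ε` becomes
`(1-ε) · #{S : e ⊆ S} ≤ #{S : e ⊆ S ∧ H'|_S = {e}}` over `S ∈ binom([n],k)`. -/
theorem stmt3 :
    ∀ ε : ℝ, 0 < ε → ∀ d : ℕ, 1 ≤ d →
      ∃ p₀ : ℝ, 0 < p₀ ∧ ∃ c : ℝ, 0 < c ∧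
        ∀ (n k : ℕ), 2 * d ≤ k → k ≤ n → (k : ℝ) / (n : ℝ) ≤ p₀ →
          ∀ H : Finset (Finset (Fin n)), (∀ e ∈ H, e.card = d) →
            ∃ H' ⊆ H,
              (c * (((ksets n k).filter
                      (fun S => (H.filter (fun e => e ⊆ S)).Nonempty)).card : ℝ) ≤
                (((ksets n k).filter
                      (fun S => (H'.filter (fun e => e ⊆ S)).Nonempty)).card : ℝ)) ∧
              ∀ e ∈ H',
                (1 - ε) * (((ksets n k).filter (fun S => e ⊆ S)).card : ℝ) ≤
                  (((ksets n k).filter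
                    (fun S => e ⊆ S ∧ H'.filter (fun e' => e' ⊆ S) = {e})).card : ℝ) := by
  intro ε hε d hd
  by_cases hε1 : 1 ≤ ε
  · refine ⟨1, one_pos, 1, one_pos, ?_⟩
    intro n k h2d hkn hp H hH
    refine ⟨H, Finset.Subset.refl H, by rw [one_mul], ?_⟩
    intro e heH
    have h1 : (1 - ε) * (((ksets n k).filter (fun S => e ⊆ S)).card : ℝ) ≤ 0 :=
      mul_nonpos_of_nonpos_of_nonneg (by linarith) (Nat.cast_nonneg _)
    exact le_trans h1 (Nat.cast_nonneg _)
  · push_neg at hε1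
    set ε₃ : ℝ := ε / 2^(d+1) with hε₃def
    have hε₃0 : 0 < ε₃ := by positivity
    have hε₃1 : ε₃ ≤ 1 := by
      rw [hε₃def, div_le_one (by positivity)]
      calc ε ≤ 1 := le_of_lt hε1
        _ = (2:ℝ)^0 := by norm_num
        _ ≤ 2^(d+1) := pow_le_pow_right₀ one_le_two (Nat.zero_le _)
    refine ⟨min (ε₃/2) (1/8), by positivity, ε * (ε₃ / 2^(3*d+2)) / 2, by positivity, ?_⟩
    intro n k h2d hkn hp H hH
    classical
    have hk0 : 0 < k := by omega
    have hn0 : 0 < n := by omega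
    have hk0' : (0:ℝ) < k := by exact_mod_cast hk0
    have hn0' : (0:ℝ) < n := by exact_mod_cast hn0
    have hp18 : (k:ℝ)/(n:ℝ) ≤ 1/8 := le_trans hp (min_le_right _ _)
    have hpε : (k:ℝ)/(n:ℝ) ≤ ε₃/2 := le_trans hp (min_le_left _ _)
    have hp8 : 8*(k:ℝ) ≤ (n:ℝ) := by
      rw [div_le_div_iff₀ hn0' (by norm_num)] at hp18
      linarith
    obtain ⟨G, hGH, hGspread, hGcov⟩ :=
      exists_good hd h2d hkn ε₃ hε₃0 hε₃1 hp8 hpε H hH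
    set B : ℝ := ((n-d).choose (k-d) : ℝ) with hBdef
    have hB0 : (0:ℝ) ≤ B := Nat.cast_nonneg _
    have hBe : ∀ e ∈ H, (((ksets n k).filter (fun S => e ⊆ S)).card : ℝ) = B := by
      intro e heH
      rw [hBdef]
      have := card_ksets_superset (n:=n) (k:=k) e (by rw [hH e heH]; omega)
      rw [this, hH e heH]
    -- potential function and its maximizer
    set Φ : Finset (Finset (Fin n)) → ℝ := fun X =>
      (((ksets n k).filter (fun S => (X.filter (fun e => e ⊆ S)).Nonempty)).card : ℝ)
        - (1-ε) * ∑ e ∈ X, (((ksets n k).filter (fun S => e ⊆ S)).card : ℝ) with hΦ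
    obtain ⟨H', hH'mem, hH'max⟩ := Finset.exists_max_image H.powerset Φ
      ⟨H, Finset.mem_powerset_self H⟩
    have hH'H : H' ⊆ H := Finset.mem_powerset.mp hH'mem
    refine ⟨H', hH'H, ?_, ?_⟩
    · -- property (1)
      have hΦle : Φ H' ≤ (((ksets n k).filter
          (fun S => (H'.filter (fun e => e ⊆ S)).Nonempty)).card : ℝ) := by
        simp only [hΦ]
        have h1 : (0:ℝ) ≤ (1-ε) * ∑ e ∈ H', (((ksets n k).filter (fun S => e ⊆ S)).card : ℝ) :=
          mul_nonneg (by linarith) (Finset.sum_nonneg (fun e _ => Nat.cast_nonneg _))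
        linarith
      have hΦG : Φ G ≤ Φ H' := hH'max G (Finset.mem_powerset.mpr hGH)
      -- lower bound Φ G
      have hsumBe : ∑ e ∈ G, (((ksets n k).filter (fun S => e ⊆ S)).card : ℝ)
          = (G.card : ℝ) * B := by
        rw [Finset.sum_congr rfl (fun e he => hBe e (hGH he)), Finset.sum_const,
          nsmul_eq_mul]
      have hbiU : G.biUnion (fun e => (ksets n k).filter (fun S => e ⊆ S))
          = (ksets n k).filter (fun S => (G.filter (fun e => e ⊆ S)).Nonempty) := by
        ext S
        simp only [Finset.mem_biUnion, mem_filter, Finset.Nonempty]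
        constructor
        · rintro ⟨e, heG, hSk, heS⟩
          exact ⟨hSk, e, heG, heS⟩
        · rintro ⟨hSk, e, heG, heS⟩
          exact ⟨e, heG, hSk, heS⟩
      have hint : ∀ e ∈ G, ∀ f ∈ G.erase e,
          ((ksets n k).filter (fun S => e ⊆ S)) ∩ ((ksets n k).filter (fun S => f ⊆ S))
            = (ksets n k).filter (fun S => e ∪ f ⊆ S) := by
        intro e _ f _
        ext S
        simp only [Finset.mem_inter, mem_filter, Finset.union_subset_iff]
        tauto
      have hbonf := bonferroni G (fun e => (ksets n k).filter (fun S => e ⊆ S))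
      rw [hbiU] at hbonf
      have hpair : ∑ e ∈ G, ∑ f ∈ G.erase e,
          ((((ksets n k).filter (fun S => e ⊆ S))
            ∩ ((ksets n k).filter (fun S => f ⊆ S))).card : ℝ)
          ≤ (G.card : ℝ) * ((ε/2) * B) := by
        calc ∑ e ∈ G, ∑ f ∈ G.erase e,
            ((((ksets n k).filter (fun S => e ⊆ S))
              ∩ ((ksets n k).filter (fun S => f ⊆ S))).card : ℝ)
            = ∑ e ∈ G, ∑ f ∈ G.erase e,
              (((ksets n k).filter (fun S => e ∪ f ⊆ S)).card : ℝ) := by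
              apply Finset.sum_congr rfl
              intro e he
              apply Finset.sum_congr rfl
              intro f hf
              rw [hint e he f hf]
          _ ≤ ∑ e ∈ G, 2^d * ε₃ * B := Finset.sum_le_sum hGspread
          _ = (G.card : ℝ) * (2^d * ε₃ * B) := by rw [Finset.sum_const, nsmul_eq_mul]
          _ = (G.card : ℝ) * ((ε/2) * B) := by
              rw [hε₃def]
              congr 1
              rw [pow_succ]
              field_simp
      have hAG : (G.card : ℝ) * B - (G.card : ℝ) * ((ε/2) * B)
          ≤ (((ksets n k).filter
              (fun S => (G.filter (fun e => e ⊆ S)).Nonempty)).card : ℝ) := by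
        have := hbonf
        rw [Finset.sum_congr rfl (fun e he => hBe e (hGH he)), Finset.sum_const,
          nsmul_eq_mul] at this
        linarith [hpair]
      have hΦGlow : (ε/2) * ((G.card : ℝ) * B) ≤ Φ G := by
        simp only [hΦ]
        rw [hsumBe]
        nlinarith [hAG]
      -- combine
      have hchain : (ε/2) * ((ε₃/2^(3*d+2)) * (((ksets n k).filter
          (fun S => (H.filter (fun e => e ⊆ S)).Nonempty)).card : ℝ))
          ≤ (((ksets n k).filter
            (fun S => (H'.filter (fun e => e ⊆ S)).Nonempty)).card : ℝ) := by
        calc (ε/2) * ((ε₃/2^(3*d+2)) * (((ksets n k).filter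
            (fun S => (H.filter (fun e => e ⊆ S)).Nonempty)).card : ℝ))
            ≤ (ε/2) * ((G.card : ℝ) * B) := by
              apply mul_le_mul_of_nonneg_left hGcov (by positivity)
          _ ≤ Φ G := hΦGlow
          _ ≤ Φ H' := hΦG
          _ ≤ _ := hΦle
      calc ε * (ε₃/2^(3*d+2)) / 2 * (((ksets n k).filter
          (fun S => (H.filter (fun e => e ⊆ S)).Nonempty)).card : ℝ)
          = (ε/2) * ((ε₃/2^(3*d+2)) * (((ksets n k).filter
            (fun S => (H.filter (fun e => e ⊆ S)).Nonempty)).card : ℝ)) := by ring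
        _ ≤ _ := hchain
    · -- property (2)
      intro e heH'
      have hsplit : (ksets n k).filter (fun S => (H'.filter (fun f => f ⊆ S)).Nonempty)
          = ((ksets n k).filter (fun S => ((H'.erase e).filter (fun f => f ⊆ S)).Nonempty))
            ∪ ((ksets n k).filter (fun S => e ⊆ S ∧ H'.filter (fun e' => e' ⊆ S) = {e})) := by
        ext S
        simp only [Finset.mem_union, mem_filter]
        constructor
        · rintro ⟨hSk, hne⟩
          by_cases hcase : ((H'.erase e).filter (fun f => f ⊆ S)).Nonempty
          · exact Or.inl ⟨hSk, hcase⟩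
          · right
            refine ⟨hSk, ?_, ?_⟩
            · obtain ⟨f, hf⟩ := hne
              rw [mem_filter] at hf
              have hfe : f = e := by
                by_contra hfe
                apply hcase
                exact ⟨f, mem_filter.mpr ⟨Finset.mem_erase.mpr ⟨hfe, hf.1⟩, hf.2⟩⟩
              rw [← hfe]; exact hf.2
            · apply Finset.ext
              intro f
              simp only [mem_filter, Finset.mem_singleton]
              constructor
              · rintro ⟨hfH', hfS⟩
                by_contra hfe
                apply hcase
                exact ⟨f, mem_filter.mpr ⟨Finset.mem_erase.mpr ⟨hfe, hfH'⟩, hfS⟩⟩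
              · intro hfeq
                rw [hfeq]
                refine ⟨heH', ?_⟩
                obtain ⟨f, hf⟩ := hne
                rw [mem_filter] at hf
                by_cases hfe : f = e
                · rw [← hfe]; exact hf.2
                · exfalso
                  apply hcase
                  exact ⟨f, mem_filter.mpr ⟨Finset.mem_erase.mpr ⟨hfe, hf.1⟩, hf.2⟩⟩
        · rintro (⟨hSk, f, hf⟩ | ⟨hSk, heS, hfeq⟩)
          · rw [mem_filter, Finset.mem_erase] at hf
            exact ⟨hSk, f, mem_filter.mpr ⟨hf.1.2, hf.2⟩⟩
          · refine ⟨hSk, e, ?_⟩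
            rw [hfeq]
            exact Finset.mem_singleton_self e
      have hdisj : Disjoint
          ((ksets n k).filter (fun S => ((H'.erase e).filter (fun f => f ⊆ S)).Nonempty))
          ((ksets n k).filter (fun S => e ⊆ S ∧ H'.filter (fun e' => e' ⊆ S) = {e})) := by
        rw [Finset.disjoint_left]
        intro S h1 h2
        rw [mem_filter] at h1 h2
        obtain ⟨-, f, hf⟩ := h1
        rw [mem_filter, Finset.mem_erase] at hf
        have : f ∈ H'.filter (fun e' => e' ⊆ S) := mem_filter.mpr ⟨hf.1.2, hf.2⟩
        rw [h2.2.2, Finset.mem_singleton] at this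
        exact hf.1.1 this
      have hcardsplit : (((ksets n k).filter
          (fun S => (H'.filter (fun f => f ⊆ S)).Nonempty)).card : ℝ)
          = (((ksets n k).filter
              (fun S => ((H'.erase e).filter (fun f => f ⊆ S)).Nonempty)).card : ℝ)
            + (((ksets n k).filter
              (fun S => e ⊆ S ∧ H'.filter (fun e' => e' ⊆ S) = {e})).card : ℝ) := by
        rw [hsplit]
        rw [Finset.card_union_of_disjoint hdisj]
        push_cast
        ring
      have hmax' : Φ (H'.erase e) ≤ Φ H' :=
        hH'max _ (Finset.mem_powerset.mpr (le_trans (Finset.erase_subset e H') hH'H))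
      have hsum' : ∑ f ∈ H', (((ksets n k).filter (fun S => f ⊆ S)).card : ℝ)
          = (((ksets n k).filter (fun S => e ⊆ S)).card : ℝ)
            + ∑ f ∈ H'.erase e, (((ksets n k).filter (fun S => f ⊆ S)).card : ℝ) :=
        (Finset.add_sum_erase H' _ heH').symm
      simp only [hΦ] at hmax'
      rw [hsum', hcardsplit] at hmax'
      nlinarith [hmax']
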